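/- If e and f are idempotents in a ring R with f - e = x lying in the Jacobson radical of R, then u = 1 + x*(2e - 1) is a unit and f = u*e*u⁻¹. -/

import Mathlib

lemma isUnit_of_sub_one_mem_jacobson_bot' {R : Type*} [Ring R] {r : R}
    (h : r - 1 ∈ Ideal.jacobson (⊥ : Ideal R)) : IsUnit r := by
  obtain ⟨s, hs⟩ := Ideal.exists_mul_sub_mem_of_sub_one_mem_jacobson r h
  rw [Ideal.mem_bot, sub_eq_zero] at hs
  have hs1 : s - 1 ∈ Ideal.jacobson (⊥ : Ideal R) := by
    have h2 : s - 1 = -(s * (r - 1)) := by rw [mul_sub, hs, mul_one]; noncomm_ring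
    rw [h2]
    exact neg_mem (Ideal.mul_mem_left _ s h)
  obtain ⟨t, ht⟩ := Ideal.exists_mul_sub_mem_of_sub_one_mem_jacobson s hs1
  rw [Ideal.mem_bot, sub_eq_zero] at ht
  have htr : t = r := by
    calc t = t * (s * r) := by rw [hs, mul_one]
      _ = (t * s) * r := by rw [mul_assoc]
      _ = r := by rw [ht, one_mul]
  exact ⟨⟨r, s, htr ▸ ht, hs⟩, rfl⟩

/-- If `e, f` are idempotents with `x = f - e` in the Jacobson radical, then
`u = 1 + x*(2e - 1)` is a unit and `f = u * e * u⁻¹`. -/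
theorem conjugating_unit_of_idempotents_diff_in_jacobson
    (R : Type*) [Ring R] (e f : R) (he : e * e = e) (hf : f * f = f)
    (hx : f - e ∈ (⊥ : Ideal R).jacobson) :
    ∃ u : Rˣ, (u : R) = 1 + (f - e) * (2 * e - 1) ∧
      f = (u : R) * e * (↑u⁻¹ : R) := by
  have hmem : (f - e) * (2 * e - 1) ∈ (⊥ : Ideal R).jacobson := by
    exact Ideal.mul_mem_right _ _ hx
  have hunit : IsUnit (1 + (f - e) * (2 * e - 1)) := by
    apply isUnit_of_sub_one_mem_jacobson_bot'
    simpa using hmem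
  obtain ⟨u, hu⟩ := hunit
  refine ⟨u, hu, ?_⟩
  have key : (u : R) * e = f * (u : R) := by
    rw [hu]
    have lhs : (1 + (f - e) * (2 * e - 1)) * e = f * e := by
      noncomm_ring
      simp only [he]
      abel
    have rhs : f * (1 + (f - e) * (2 * e - 1)) = f * e := by
      noncomm_ring
      rw [he, hf, ← mul_assoc, hf]
      abel
    rw [lhs, rhs]
  calc f = f * (u : R) * (↑u⁻¹ : R) := by
        rw [mul_assoc, Units.mul_inv, mul_one]
    _ = (u : R) * e * (↑u⁻¹ : R) := by rw [← key]
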